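/- Let H be a 3-uniform hypergraph on n vertices with minimum codegree at least ⌊n/3⌋. Then H has a spanning tight component: a tight component whose edges together cover all n vertices. -/

import Mathlib

open Finset

/-- Two edges are in the same tight component of the `3`-uniform hypergraph with edge
set `E` iff they are related by the reflexive-transitive closure of the relation
"both are edges and they share exactly 2 vertices". -/
def TightRel {V : Type*} [DecidableEq V] (E : Finset (Finset V)) :
    Finset V → Finset V → Prop :=
  Relation.ReflTransGen (fun e f => e ∈ E ∧ f ∈ E ∧ (e ∩ f).card = 2)

section Aux
variable {V : Type*} [DecidableEq V] {E : Finset (Finset V)}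

lemma TightRel.refl {e : Finset V} : TightRel E e e := Relation.ReflTransGen.refl

lemma TightRel.trans {e f g : Finset V} (h1 : TightRel E e f) (h2 : TightRel E f g) :
    TightRel E e g := Relation.ReflTransGen.trans h1 h2

lemma TightRel.symm {e f : Finset V} (h : TightRel E e f) : TightRel E f e :=
  (@Relation.ReflTransGen.stdSymm _ _
    ⟨fun a b hab => ⟨hab.2.1, hab.1, by rw [Finset.inter_comm]; exact hab.2.2⟩⟩).symm _ _ h

lemma triple_distinct {u v w : V} (h : ({u, v, w} : Finset V).card = 3) :
    u ≠ v ∧ u ≠ w ∧ v ≠ w := by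
  refine ⟨?_, ?_, ?_⟩ <;> rintro rfl
  · have hs : ({u, u, w} : Finset V) ⊆ {u, w} := by intro a; simp; try tauto
    have h2 : ({u, w} : Finset V).card ≤ 2 := le_trans (Finset.card_insert_le _ _) (by simp)
    have := (Finset.card_le_card hs).trans h2
    omega
  · have hs : ({u, v, u} : Finset V) ⊆ {u, v} := by intro a; simp; try tauto
    have h2 : ({u, v} : Finset V).card ≤ 2 := le_trans (Finset.card_insert_le _ _) (by simp)
    have := (Finset.card_le_card hs).trans h2
    omega
  · have hs : ({u, v, v} : Finset V) ⊆ {u, v} := by intro a; simp; try tauto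
    have h2 : ({u, v} : Finset V).card ≤ 2 := le_trans (Finset.card_insert_le _ _) (by simp)
    have := (Finset.card_le_card hs).trans h2
    omega

lemma pair_rel (hunif : ∀ e ∈ E, e.card = 3) {a b : V} (hab : a ≠ b) {g h : Finset V}
    (hg : g ∈ E) (hh : h ∈ E)
    (hag : a ∈ g) (hbg : b ∈ g) (hah : a ∈ h) (hbh : b ∈ h) : TightRel E g h := by
  rcases eq_or_ne g h with rfl | hne
  · exact TightRel.refl
  · refine Relation.ReflTransGen.single ⟨hg, hh, ?_⟩
    have h2 : 2 ≤ (g ∩ h).card := by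
      have hsub : ({a, b} : Finset V) ⊆ g ∩ h := by
        intro c hc
        simp only [mem_insert, mem_singleton] at hc
        rcases hc with rfl | rfl <;> simp [Finset.mem_inter, *]
      calc 2 = ({a, b} : Finset V).card := (Finset.card_pair hab).symm
        _ ≤ _ := Finset.card_le_card hsub
    have h3 : (g ∩ h).card ≤ 3 := by
      rw [← hunif g hg]; exact Finset.card_le_card Finset.inter_subset_left
    rcases Nat.lt_or_ge (g ∩ h).card 3 with hlt | hge
    · omega
    · exfalso
      have he : g ∩ h = g := Finset.eq_of_subset_of_card_le Finset.inter_subset_left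
        (by rw [hunif g hg]; omega)
      have : g ⊆ h := he ▸ Finset.inter_subset_right
      exact hne (Finset.eq_of_subset_of_card_le this (by rw [hunif g hg, hunif h hh]))

end Aux

/-- Codegree neighborhood. -/
def Nbr {V : Type*} [Fintype V] [DecidableEq V] (E : Finset (Finset V)) (u v : V) :
    Finset V :=
  Finset.univ.filter fun w => ({u, v, w} : Finset V) ∈ E

lemma mem_Nbr {V : Type*} [Fintype V] [DecidableEq V] {E : Finset (Finset V)} {u v w : V} :
    w ∈ Nbr E u v ↔ ({u, v, w} : Finset V) ∈ E := by simp [Nbr]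

/-- A 3-uniform hypergraph on `n ≥ 3` vertices with minimum codegree at least `⌊n/3⌋`
has a spanning tight component. -/
theorem stmt3 {V : Type*} [Fintype V] [DecidableEq V] (E : Finset (Finset V))
    (hn : 3 ≤ Fintype.card V)
    (hunif : ∀ e ∈ E, e.card = 3)
    (hcod : ∀ u v : V, u ≠ v →
      Fintype.card V / 3 ≤
        (Finset.univ.filter (fun w => ({u, v, w} : Finset V) ∈ E)).card) :
    ∃ e₀ ∈ E, ∀ v : V, ∃ e ∈ E, TightRel E e₀ e ∧ v ∈ e := by
  by_contra hcon
  push_neg at hcon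
  -- hcon : ∀ e₀ ∈ E, ∃ v, ∀ e ∈ E, TightRel E e₀ e → v ∉ e
  have hcodN : ∀ u v : V, u ≠ v → Fintype.card V / 3 ≤ (Nbr E u v).card := hcod
  have hedge : ∀ u v : V, u ≠ v → ∃ w, ({u, v, w} : Finset V) ∈ E := by
    intro u v huv
    have h1 := hcodN u v huv
    have h2 : 0 < (Nbr E u v).card := by omega
    obtain ⟨w, hw⟩ := Finset.card_pos.mp h2
    exact ⟨w, mem_Nbr.mp hw⟩
  have hdist : ∀ {u v w : V}, ({u, v, w} : Finset V) ∈ E → u ≠ v ∧ u ≠ w ∧ v ≠ w :=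
    fun h => triple_distinct (hunif _ h)
  have hself1 : ∀ u v : V, u ∉ Nbr E u v := fun u v h => (hdist (mem_Nbr.mp h)).2.1 rfl
  have hself2 : ∀ u v : V, v ∉ Nbr E u v := fun u v h => (hdist (mem_Nbr.mp h)).2.2 rfl
  obtain ⟨x, z, hxz⟩ := Fintype.exists_pair_of_one_lt_card
    (show 1 < Fintype.card V by omega) (α := V)
  obtain ⟨wC, hC⟩ := hedge x z hxz
  obtain ⟨y, hy⟩ := hcon {x, z, wC} hC
  have hyC : y ∉ ({x, z, wC} : Finset V) := hy _ hC TightRel.refl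
  have hyx : y ≠ x := by rintro rfl; exact hyC (by simp)
  have hyz : y ≠ z := by rintro rfl; exact hyC (by simp)
  obtain ⟨wD, hD⟩ := hedge x y (Ne.symm hyx)
  by_cases hA : ∃ z' : V, (∃ g ∈ E, TightRel E {x, z, wC} g ∧ x ∈ g ∧ z' ∈ g) ∧
      ∀ e ∈ E, TightRel E {x, y, wD} e → z' ∉ e
  · -- Case A : mutual pair
    obtain ⟨z', ⟨g, hgE, hgC, hxg, hz'g⟩, hz'⟩ := hA
    have hz'D : z' ∉ ({x, y, wD} : Finset V) := hz' _ hD TightRel.refl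
    have hz'x : z' ≠ x := by rintro rfl; exact hz'D (by simp)
    have hz'y : z' ≠ y := by rintro rfl; exact hz'D (by simp)
    have d1 : Disjoint (Nbr E x y) (Nbr E x z') := by
      rw [Finset.disjoint_left]
      intro w hw1 hw2
      rw [mem_Nbr] at hw1 hw2
      obtain ⟨hxy, hxw, hyw⟩ := hdist hw1
      have r1 : TightRel E g {x, z', w} :=
        pair_rel hunif (Ne.symm hz'x) hgE hw2 hxg hz'g (by simp) (by simp)
      have r2 : TightRel E {x, z', w} {x, y, w} :=
        pair_rel hunif hxw hw2 hw1 (by simp) (by simp) (by simp) (by simp)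
      exact hy _ hw1 ((hgC.trans r1).trans r2) (by simp)
    have d2 : Disjoint (Nbr E x y) (Nbr E y z') := by
      rw [Finset.disjoint_left]
      intro w hw1 hw2
      rw [mem_Nbr] at hw1 hw2
      obtain ⟨hxy, hxw, hyw⟩ := hdist hw1
      have r1 : TightRel E {x, y, wD} {x, y, w} :=
        pair_rel hunif (Ne.symm hyx) hD hw1 (by simp) (by simp) (by simp) (by simp)
      have r2 : TightRel E {x, y, w} {y, z', w} :=
        pair_rel hunif hyw hw1 hw2 (by simp) (by simp) (by simp) (by simp)
      exact hz' _ hw2 (r1.trans r2) (by simp)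
    have d3 : Disjoint (Nbr E x z') (Nbr E y z') := by
      rw [Finset.disjoint_left]
      intro w hw1 hw2
      rw [mem_Nbr] at hw1 hw2
      obtain ⟨hxz', hxw, hz'w⟩ := hdist hw1
      have r1 : TightRel E g {x, z', w} :=
        pair_rel hunif (Ne.symm hz'x) hgE hw1 hxg hz'g (by simp) (by simp)
      have r2 : TightRel E {x, z', w} {y, z', w} :=
        pair_rel hunif hz'w hw1 hw2 (by simp) (by simp) (by simp) (by simp)
      exact hy _ hw2 ((hgC.trans r1).trans r2) (by simp)
    have hxN : x ∉ Nbr E y z' := by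
      intro hmem; rw [mem_Nbr] at hmem
      have r1 : TightRel E g {y, z', x} :=
        pair_rel hunif (Ne.symm hz'x) hgE hmem hxg hz'g (by simp) (by simp)
      exact hy _ hmem (hgC.trans r1) (by simp)
    have hyN : y ∉ Nbr E x z' := by
      intro hmem; rw [mem_Nbr] at hmem
      have r1 : TightRel E g {x, z', y} :=
        pair_rel hunif (Ne.symm hz'x) hgE hmem hxg hz'g (by simp) (by simp)
      exact hy _ hmem (hgC.trans r1) (by simp)
    have hz'N : z' ∉ Nbr E x y := by
      intro hmem; rw [mem_Nbr] at hmem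
      have r1 : TightRel E {x, y, wD} {x, y, z'} :=
        pair_rel hunif (Ne.symm hyx) hD hmem (by simp) (by simp) (by simp) (by simp)
      exact hz' _ hmem r1 (by simp)
    have dT1 : Disjoint (Nbr E x y) ({x, y, z'} : Finset V) := by
      rw [Finset.disjoint_right]
      intro a ha
      simp only [Finset.mem_insert, Finset.mem_singleton] at ha
      rcases ha with rfl | rfl | rfl
      exacts [hself1 _ _, hself2 _ _, hz'N]
    have dT2 : Disjoint (Nbr E x z') ({x, y, z'} : Finset V) := by
      rw [Finset.disjoint_right]
      intro a ha
      simp only [Finset.mem_insert, Finset.mem_singleton] at ha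
      rcases ha with rfl | rfl | rfl
      exacts [hself1 _ _, hyN, hself2 _ _]
    have dT3 : Disjoint (Nbr E y z') ({x, y, z'} : Finset V) := by
      rw [Finset.disjoint_right]
      intro a ha
      simp only [Finset.mem_insert, Finset.mem_singleton] at ha
      rcases ha with rfl | rfl | rfl
      exacts [hxN, hself1 _ _, hself2 _ _]
    have hcard3 : ({x, y, z'} : Finset V).card = 3 := by
      rw [Finset.card_insert_of_notMem, Finset.card_insert_of_notMem, Finset.card_singleton]
      · simp only [Finset.mem_singleton]; exact Ne.symm hz'y
      · simp only [Finset.mem_insert, Finset.mem_singleton]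
        push_neg
        exact ⟨Ne.symm hyx, Ne.symm hz'x⟩
    have dMid : Disjoint (Nbr E x y ∪ Nbr E x z') (Nbr E y z') :=
      Finset.disjoint_union_left.mpr ⟨d2, d3⟩
    have dOuter : Disjoint (Nbr E x y ∪ Nbr E x z' ∪ Nbr E y z') ({x, y, z'} : Finset V) :=
      Finset.disjoint_union_left.mpr ⟨Finset.disjoint_union_left.mpr ⟨dT1, dT2⟩, dT3⟩
    have hU : (Nbr E x y ∪ Nbr E x z' ∪ Nbr E y z' ∪ {x, y, z'}).card
        = (Nbr E x y).card + (Nbr E x z').card + (Nbr E y z').card + 3 := by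
      rw [Finset.card_union_of_disjoint dOuter, Finset.card_union_of_disjoint dMid,
        Finset.card_union_of_disjoint d1, hcard3]
    have hle : (Nbr E x y ∪ Nbr E x z' ∪ Nbr E y z' ∪ {x, y, z'}).card ≤ Fintype.card V :=
      Finset.card_le_univ _
    have c1 := hcodN x y (Ne.symm hyx)
    have c2 := hcodN x z' (Ne.symm hz'x)
    have c3 := hcodN y z' (Ne.symm hz'y)
    omega
  · -- Case B : three components at x
    push_neg at hA
    obtain ⟨y₂, hy₂⟩ := hcon {x, y, wD} hD
    have hy₂D : y₂ ∉ ({x, y, wD} : Finset V) := hy₂ _ hD TightRel.refl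
    have hy₂x : y₂ ≠ x := by rintro rfl; exact hy₂D (by simp)
    have hy₂y : y₂ ≠ y := by rintro rfl; exact hy₂D (by simp)
    obtain ⟨wF, hF⟩ := hedge x y₂ (Ne.symm hy₂x)
    have hCD : ¬ TightRel E {x, z, wC} {x, y, wD} := fun h => hy _ hD h (by simp)
    have hDF : ¬ TightRel E {x, y, wD} {x, y₂, wF} := fun h => hy₂ _ hF h (by simp)
    have hCF : ¬ TightRel E {x, z, wC} {x, y₂, wF} := by
      intro h
      obtain ⟨e, heE, heD, hmem⟩ := hA y₂ ⟨{x, y₂, wF}, hF, h, by simp, by simp⟩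
      exact hy₂ e heE heD hmem
    have reachC : ∀ w ∈ insert z (Nbr E x z),
        ∃ g ∈ E, TightRel E {x, z, wC} g ∧ x ∈ g ∧ w ∈ g := by
      intro w hw
      rcases Finset.mem_insert.mp hw with rfl | hw
      · exact ⟨_, hC, TightRel.refl, by simp, by simp⟩
      · rw [mem_Nbr] at hw
        exact ⟨{x, z, w}, hw,
          pair_rel hunif hxz hC hw (by simp) (by simp) (by simp) (by simp), by simp, by simp⟩
    have reachD : ∀ w ∈ insert y (Nbr E x y),
        ∃ g ∈ E, TightRel E {x, y, wD} g ∧ x ∈ g ∧ w ∈ g := by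
      intro w hw
      rcases Finset.mem_insert.mp hw with rfl | hw
      · exact ⟨_, hD, TightRel.refl, by simp, by simp⟩
      · rw [mem_Nbr] at hw
        exact ⟨{x, y, w}, hw,
          pair_rel hunif (Ne.symm hyx) hD hw (by simp) (by simp) (by simp) (by simp),
          by simp, by simp⟩
    have reachF : ∀ w ∈ insert y₂ (Nbr E x y₂),
        ∃ g ∈ E, TightRel E {x, y₂, wF} g ∧ x ∈ g ∧ w ∈ g := by
      intro w hw
      rcases Finset.mem_insert.mp hw with rfl | hw
      · exact ⟨_, hF, TightRel.refl, by simp, by simp⟩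
      · rw [mem_Nbr] at hw
        exact ⟨{x, y₂, w}, hw,
          pair_rel hunif (Ne.symm hy₂x) hF hw (by simp) (by simp) (by simp) (by simp),
          by simp, by simp⟩
    have hxC : x ∉ insert z (Nbr E x z) := by
      intro h
      rcases Finset.mem_insert.mp h with h | h
      · exact hxz h
      · exact hself1 x z h
    have hxD : x ∉ insert y (Nbr E x y) := by
      intro h
      rcases Finset.mem_insert.mp h with h | h
      · exact hyx h.symm
      · exact hself1 x y h
    have hxF : x ∉ insert y₂ (Nbr E x y₂) := by
      intro h
      rcases Finset.mem_insert.mp h with h | h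
      · exact hy₂x h.symm
      · exact hself1 x y₂ h
    have gdisj : ∀ {e f : Finset V} {A B : Finset V},
        (∀ w ∈ A, ∃ g ∈ E, TightRel E e g ∧ x ∈ g ∧ w ∈ g) →
        (∀ w ∈ B, ∃ g ∈ E, TightRel E f g ∧ x ∈ g ∧ w ∈ g) →
        x ∉ A → ¬ TightRel E e f → Disjoint A B := by
      intro e f A B hA' hB' hxA hef
      rw [Finset.disjoint_left]
      intro w hwA hwB
      obtain ⟨g1, hg1E, hg1, hxg1, hwg1⟩ := hA' w hwA
      obtain ⟨g2, hg2E, hg2, hxg2, hwg2⟩ := hB' w hwB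
      have hwx : x ≠ w := by rintro rfl; exact hxA hwA
      exact hef ((hg1.trans (pair_rel hunif hwx hg1E hg2E hxg1 hwg1 hxg2 hwg2)).trans hg2.symm)
    have dCD := gdisj reachC reachD hxC hCD
    have dCF := gdisj reachC reachF hxC hCF
    have dDF := gdisj reachD reachF hxD hDF
    have cC : Fintype.card V / 3 + 1 ≤ (insert z (Nbr E x z)).card := by
      rw [Finset.card_insert_of_notMem (hself2 x z)]
      have := hcodN x z hxz
      omega
    have cD : Fintype.card V / 3 + 1 ≤ (insert y (Nbr E x y)).card := by
      rw [Finset.card_insert_of_notMem (hself2 x y)]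
      have := hcodN x y (Ne.symm hyx)
      omega
    have cF : Fintype.card V / 3 + 1 ≤ (insert y₂ (Nbr E x y₂)).card := by
      rw [Finset.card_insert_of_notMem (hself2 x y₂)]
      have := hcodN x y₂ (Ne.symm hy₂x)
      omega
    have dOuter : Disjoint (insert z (Nbr E x z) ∪ insert y (Nbr E x y))
        (insert y₂ (Nbr E x y₂)) := Finset.disjoint_union_left.mpr ⟨dCF, dDF⟩
    have hU : (insert z (Nbr E x z) ∪ insert y (Nbr E x y) ∪ insert y₂ (Nbr E x y₂)).card
        = (insert z (Nbr E x z)).card + (insert y (Nbr E x y)).card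
          + (insert y₂ (Nbr E x y₂)).card := by
      rw [Finset.card_union_of_disjoint dOuter, Finset.card_union_of_disjoint dCD]
    have hxU : x ∉ insert z (Nbr E x z) ∪ insert y (Nbr E x y) ∪ insert y₂ (Nbr E x y₂) := by
      intro h
      rcases Finset.mem_union.mp h with h | h
      · rcases Finset.mem_union.mp h with h | h
        · exact hxC h
        · exact hxD h
      · exact hxF h
    have final : (insert x (insert z (Nbr E x z) ∪ insert y (Nbr E x y)
        ∪ insert y₂ (Nbr E x y₂))).card ≤ Fintype.card V := Finset.card_le_univ _
    rw [Finset.card_insert_of_notMem hxU, hU] at final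
    omega
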